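/- For every t∈[0,T], the map z ↦ w(t,z) is non-decreasing and convex on (0,∞), with lim_{z→∞} w(t,z) = +∞. Moreover the limit at zero satisfies: lim_{z↓0} w(t,z) = ∫_0^{t*−t} e^{−cs}·_s p_t·f(t+s) ds for t∈[0,t*), and lim_{z↓0} w(t,z) = 0 for t∈[t*,T]. -/

import Mathlib

open MeasureTheory ProbabilityTheory Filter Set
open scoped ENNReal

noncomputable section

/-- The setting of De Angelis–Milazzo–Stabile: a probability space carrying a
Brownian motion `W` with filtration `F`, market/contract parameters, a penalty
function `k` and a mortality force `mu` satisfying Assumption 1 of the paper. -/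
structure VASetting (Ω : Type*) [mΩ : MeasurableSpace Ω] where
  /-- the underlying probability measure `ℙ` -/
  P : Measure Ω
  probP : IsProbabilityMeasure P
  /-- the filtration generated by the Brownian motion -/
  F : Filtration ℝ mΩ
  /-- the driving Brownian motion -/
  W : ℝ → Ω → ℝ
  T : ℝ
  sigma : ℝ
  r : ℝ
  c : ℝ
  g : ℝ
  lam : ℝ
  /-- the penalty (surrender charge) function -/
  k : ℝ → ℝ
  /-- the mortality force -/
  mu : ℝ → ℝ
  hT : 0 < T
  hsigma : 0 < sigma
  hr : 0 ≤ r
  hc : 0 ≤ c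
  hg : 0 ≤ g
  hlam : 0 ≤ lam
  -- `W` is a standard Brownian motion for the filtration `F`
  hW0 : ∀ ω, W 0 ω = 0
  hWcont : ∀ ω, Continuous fun s => W s ω
  hWmeas : ∀ s, Measurable (W s)
  hWadapted : Adapted F W
  hWgauss : ∀ s t : ℝ, 0 ≤ s → s ≤ t →
    Measure.map (fun ω => W t ω - W s ω) P = gaussianReal 0 (Real.toNNReal (t - s))
  hWindep : ∀ s t : ℝ, 0 ≤ s → s ≤ t →
    Indep (MeasurableSpace.comap (fun ω => W t ω - W s ω) inferInstance) (F s) P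
  -- Assumption 1 of the paper
  hk_mono : AntitoneOn k (Icc 0 T)
  hk_smooth : ContDiffOn ℝ 2 k (Icc 0 T)
  hkT : k T = 0
  hmu_nonneg : ∀ t, 0 ≤ t → 0 ≤ mu t
  hmu_smooth : ContDiffOn ℝ 1 mu (Ici 0)
  hmu_growth : ∀ t, 0 ≤ t → deriv mu t ≤ lam * mu t

namespace VASetting

variable {Ω : Type*} [mΩ : MeasurableSpace Ω] (S : VASetting Ω)

/-- `α := g + c − r`. -/
def alpha : ℝ := S.g + S.c - S.r

/-- The geometric Brownian motion `Z^z_s = z·exp((α−σ²/2)s + σW_s)`. -/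
def Z (z s : ℝ) (ω : Ω) : ℝ :=
  z * Real.exp ((S.alpha - S.sigma ^ 2 / 2) * s + S.sigma * S.W s ω)

/-- The survival probability `_s p_t = exp(−∫_0^s μ(t+u) du)`. -/
def surv (t s : ℝ) : ℝ := Real.exp (-(∫ u in (0:ℝ)..s, S.mu (t + u)))

/-- `f(t) = k(t)(c+μ(t)) − k'(t) − c`. -/
def f (t : ℝ) : ℝ := S.k t * (S.c + S.mu t) - deriv S.k t - S.c

/-- `t* = inf{t ∈ [0,T) : f(t) < 0} ∧ T` (with `inf ∅ = ∞`). -/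
def tstar : ℝ := sInf ({t | t ∈ Ico (0:ℝ) S.T ∧ S.f t < 0} ∪ {S.T})

/-- Assumption 2 of the paper: `f` changes sign at most once, from `+` to `−`,
together with one of the two monotonicity conditions (i), (ii). -/
def Assumption2 : Prop :=
  (∀ t ∈ Icc (0:ℝ) S.tstar, 0 ≤ S.f t) ∧
  (∀ t ∈ Ioc S.tstar S.T, S.f t < 0) ∧
  ((∀ t ∈ Ioc S.tstar S.T, deriv S.mu t ≤ 0 ∧ deriv S.f t ≤ 0) ∨
   (∀ t ∈ Ioc S.tstar S.T, 0 < deriv S.mu t ∧ deriv S.f t - S.mu t * S.f t ≤ 0))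

/-- The payoff `𝒫_{t,z}(τ)`. -/
def payoff (t z : ℝ) (τ : Ω → ℝ) (ω : Ω) : ℝ :=
  (∫ s in (0:ℝ)..(τ ω),
    Real.exp (-S.c * s) * S.surv t s *
      (S.f (t + s) + S.mu (t + s) * max (S.Z z s ω - 1) 0)) +
  (if τ ω = S.T - t then
    Real.exp (-S.c * (S.T - t)) * S.surv t (S.T - t) * max (S.Z z (S.T - t) ω - 1) 0
  else 0)

/-- Admissible stopping times for the problem started at time `t`:
`F`-stopping times with values in `[0, T−t]`. -/
def isAdmissible (t : ℝ) (τ : Ω → ℝ) : Prop :=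
  IsStoppingTime S.F (fun ω => (τ ω : WithTop ℝ)) ∧ ∀ ω, τ ω ∈ Icc (0:ℝ) (S.T - t)

/-- The value function `w(t,z) = sup_{0≤τ≤T−t} E[𝒫_{t,z}(τ)]`. -/
def w (t z : ℝ) : ℝ :=
  sSup {x | ∃ τ : Ω → ℝ, S.isAdmissible t τ ∧ x = ∫ ω, S.payoff t z τ ω ∂S.P}

/-- The optimal stopping boundary `b(t) = inf{z>0 : w(t,z)>0}`. -/
def b (t : ℝ) : ℝ := sInf {z | 0 < z ∧ 0 < S.w t z}

/-- The boundary extended by its terminal value `b(T) := 1`. -/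
def bEx (t : ℝ) : ℝ := if t < S.T then S.b t else 1

/-- `H(t,z) = μ(t)(z−1)⁺ + f(t)`. -/
def H (t z : ℝ) : ℝ := S.mu t * max (z - 1) 0 + S.f t

/-- The optimal stopping time `τ*_{t,z} = inf{s ≥ 0 : Z^z_s ≤ b(t+s)} ∧ (T−t)`. -/
def tauStar (t z : ℝ) (ω : Ω) : ℝ :=
  sInf ({s | 0 ≤ s ∧ S.Z z s ω ≤ S.bEx (t + s)} ∪ {S.T - t})

/-- The hitting time of the interior,
`τ'_{t,z} = inf{s ≥ 0 : Z^z_s < b(t+s)} ∧ (T−t)`. -/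
def tauStrict (t z : ℝ) (ω : Ω) : ℝ :=
  sInf ({s | 0 ≤ s ∧ S.Z z s ω < S.bEx (t + s)} ∪ {S.T - t})

/-- The continuation region `𝒞`. -/
def Cset : Set (ℝ × ℝ) := {p | p.1 ∈ Ico (0:ℝ) S.T ∧ 0 < p.2 ∧ 0 < S.w p.1 p.2}

/-- The stopping region `𝒟`. -/
def Dset : Set (ℝ × ℝ) :=
  {p | p.1 ∈ Ico (0:ℝ) S.T ∧ 0 < p.2 ∧ S.w p.1 p.2 = 0} ∪ {p | p.1 = S.T ∧ 0 < p.2}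

/-- The log-normal transition density `Φ(z,s,y)` of `Z`. -/
def Phi (z s y : ℝ) : ℝ :=
  1 / (Real.sqrt (2 * Real.pi * S.sigma ^ 2 * s) * y) *
    Real.exp (-(Real.log (y / z) - (S.alpha - S.sigma ^ 2 / 2) * s) ^ 2 /
      (2 * S.sigma ^ 2 * s))

/-- `μ_M = max_{s ∈ [0,T]} μ(s)`. -/
def muMax : ℝ := sSup (S.mu '' Icc (0:ℝ) S.T)

/-- The level curve `b_δ(t) = inf{z>0 : w(t,z) > δ}`. -/
def bDelta (δ t : ℝ) : ℝ := sInf {z | 0 < z ∧ δ < S.w t z}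

/-- The quantity `Θ(t,z,ε)` of the paper. -/
def Theta (t z ε : ℝ) : ℝ :=
  (∫ ω, (if S.T - t - ε ≤ S.tauStar t z ω then
      Real.exp (-S.c * (S.T - t - ε)) * S.surv (t + ε) (S.T - t - ε) *
        max (S.Z z (S.T - t - ε) ω - 1) 0
    else 0) ∂S.P) -
  (∫ ω, (if S.tauStar t z ω = S.T - t then
      Real.exp (-S.c * (S.T - t)) * S.surv t (S.T - t) * max (S.Z z (S.T - t) ω - 1) 0
    else 0) ∂S.P)

/-- `ψ` solves the boundary integral equation on `Γ_ψ = {ψ > 0}`. -/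
def SolvesIntEq (ψ : ℝ → ℝ) : Prop :=
  ∀ t ∈ Ico (0:ℝ) S.T, 0 < ψ t →
    Real.exp (-S.c * (S.T - t)) * S.surv t (S.T - t) *
        (∫ ω, max (S.Z (ψ t) (S.T - t) ω - 1) 0 ∂S.P) +
      (∫ s in (0:ℝ)..(S.T - t),
        Real.exp (-S.c * s) * S.surv t s *
          (∫ ω, (if ψ (t + s) < S.Z (ψ t) s ω then S.H (t + s) (S.Z (ψ t) s ω) else 0)
            ∂S.P)) = 0

/-- The class `Σ` of candidate boundaries. -/
def SigmaClass (ψ : ℝ → ℝ) : Prop :=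
  (∀ t ∈ Icc (0:ℝ) S.T, 0 ≤ ψ t ∧ ψ t ≤ max (1 - S.f t / S.mu t) 0) ∧
  ∃ tψ ∈ Ico S.tstar S.T,
    (∀ t ∈ Ico (0:ℝ) tψ, ψ t = 0) ∧ ContinuousOn ψ (Icc tψ S.T) ∧ ψ S.T = 1

/-- The Brownian motion `W̃` driving the account value under the pricing
measure (`W_t = σt − W̃_t` as in the paper's Girsanov change of measure). -/
def Wtilde (s : ℝ) (ω : Ω) : ℝ := S.sigma * s - S.W s ω

/-- The account value process `X_s = x₀·exp((r−c−σ²/2)s + σW̃_s)`. -/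
def X (x0 s : ℝ) (ω : Ω) : ℝ :=
  x0 * Real.exp ((S.r - S.c - S.sigma ^ 2 / 2) * s + S.sigma * S.Wtilde s ω)

/-- The pricing (risk-neutral) measure `Q`, with `dQ = M_T^{-1} dP`. -/
def Q : Measure Ω :=
  S.P.withDensity fun ω =>
    ENNReal.ofReal (Real.exp (S.sigma * S.W S.T ω - S.sigma ^ 2 * S.T / 2))

/-- The optimal surrender boundary `ℓ_{x₀}(t) = x₀e^{gt}/b(t)` (with value `∞`
where `b(t) = 0`). -/
def ell (x0 t : ℝ) : ℝ≥0∞ :=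
  ENNReal.ofReal (x0 * Real.exp (S.g * t)) / ENNReal.ofReal (S.bEx t)

/-- The optimal surrender time `γ* = inf{s ∈ [0,T) : X_s ≥ ℓ_{x₀}(s)} ∧ T`. -/
def gammaStar (x0 : ℝ) (ω : Ω) : ℝ :=
  sInf ({s | s ∈ Ico (0:ℝ) S.T ∧ S.ell x0 s ≤ ENNReal.ofReal (S.X x0 s ω)} ∪ {S.T})

/-- The rational price of the VA at time zero, `V₀ = x₀·u(0,1)` where
`u(t,z) = w(t,z) + 1 − k(t)`. -/
def V0 (x0 : ℝ) : ℝ := x0 * (S.w 0 1 + 1 - S.k 0)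

end VASetting

/-! ### Auxiliary development for the proof -/

open scoped NNReal

section GaussianAux

lemma exp_mul_gaussianPDFReal (b : ℝ) {v : ℝ≥0} (hv : v ≠ 0) (x : ℝ) :
    Real.exp (b * x) * gaussianPDFReal 0 v x
      = Real.exp (b ^ 2 * v / 2) * gaussianPDFReal (b * v) v x := by
  have hv' : (0:ℝ) < (v:ℝ) := by positivity
  have key : b * x + -(x - 0) ^ 2 / (2 * v) = b ^ 2 * v / 2 + -(x - b * v) ^ 2 / (2 * v) := by
    field_simp
    ring
  simp only [gaussianPDFReal]
  rw [mul_left_comm, ← Real.exp_add, mul_left_comm, ← Real.exp_add, key]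

lemma integrable_exp_mul_gaussianReal (b : ℝ) (v : ℝ≥0) :
    Integrable (fun x => Real.exp (b * x)) (gaussianReal 0 v) := by
  by_cases hv : v = 0
  · subst hv
    rw [gaussianReal_zero_var]
    constructor
    · exact (Real.continuous_exp.comp (continuous_const.mul continuous_id)).aestronglyMeasurable
    · rw [HasFiniteIntegral, lintegral_dirac]
      exact ENNReal.coe_lt_top
  · rw [gaussianReal_of_var_ne_zero 0 hv]
    have hmeas : Measurable fun x => (gaussianPDFReal 0 v x).toNNReal :=
      (measurable_gaussianPDFReal 0 v).real_toNNReal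
    have h0 : (gaussianPDF 0 v) = fun x => ((gaussianPDFReal 0 v x).toNNReal : ℝ≥0∞) := rfl
    rw [h0, integrable_withDensity_iff_integrable_smul hmeas]
    have heq : (fun x => ((gaussianPDFReal 0 v x).toNNReal : ℝ≥0) • Real.exp (b * x))
        = fun x => Real.exp (b ^ 2 * v / 2) * gaussianPDFReal (b * v) v x := by
      funext x
      rw [NNReal.smul_def, Real.coe_toNNReal _ (gaussianPDFReal_nonneg 0 v x), smul_eq_mul,
        mul_comm, exp_mul_gaussianPDFReal b hv x]
    rw [heq]
    exact (integrable_gaussianPDFReal (b * v) v).const_mul _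

lemma integral_exp_mul_gaussianReal (b : ℝ) (v : ℝ≥0) :
    ∫ x, Real.exp (b * x) ∂(gaussianReal 0 v) = Real.exp (b ^ 2 * v / 2) := by
  by_cases hv : v = 0
  · subst hv
    rw [gaussianReal_zero_var, integral_dirac]
    norm_num
  · rw [gaussianReal_of_var_ne_zero 0 hv]
    have hmeas : Measurable fun x => (gaussianPDFReal 0 v x).toNNReal :=
      (measurable_gaussianPDFReal 0 v).real_toNNReal
    have h0 : (gaussianPDF 0 v) = fun x => ((gaussianPDFReal 0 v x).toNNReal : ℝ≥0∞) := rfl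
    rw [h0, integral_withDensity_eq_integral_smul hmeas]
    have heq : (fun x => ((gaussianPDFReal 0 v x).toNNReal : ℝ≥0) • Real.exp (b * x))
        = fun x => Real.exp (b ^ 2 * v / 2) * gaussianPDFReal (b * v) v x := by
      funext x
      rw [NNReal.smul_def, Real.coe_toNNReal _ (gaussianPDFReal_nonneg 0 v x), smul_eq_mul,
        mul_comm, exp_mul_gaussianPDFReal b hv x]
    rw [heq, integral_const_mul, integral_gaussianPDFReal_eq_one (b * v) hv, mul_one]

lemma ae_ne_const (c : ℝ) : ∀ᵐ s : ℝ ∂(volume : Measure ℝ), s ≠ c := by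
  rw [ae_iff]
  have h : {s : ℝ | ¬ s ≠ c} = {c} := by ext s; simp [not_not]
  rw [h]
  exact measure_singleton c

lemma indicator_intervalIntegral_eq (g : ℝ → ℝ) {c' u1 : ℝ} (h0 : 0 ≤ c') (h1 : c' ≤ u1) :
    ∫ s in (0:ℝ)..c', g s = ∫ s in Set.Ioc (0:ℝ) u1, (if s ≤ c' then g s else 0) := by
  rw [intervalIntegral.integral_of_le h0]
  have h2 : (fun s => if s ≤ c' then g s else 0) = Set.indicator (Set.Iic c') g := by
    funext s; simp [Set.indicator_apply, Set.mem_Iic]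
  have hset : Set.Iic c' ∩ Set.Ioc (0:ℝ) u1 = Set.Ioc (0:ℝ) c' := by
    ext s
    simp only [Set.mem_inter_iff, Set.mem_Iic, Set.mem_Ioc]
    constructor
    · rintro ⟨h, h', _⟩; exact ⟨h', h⟩
    · rintro ⟨h, h'⟩; exact ⟨h', h, h'.trans h1⟩
  rw [h2, MeasureTheory.integral_indicator measurableSet_Iic,
    MeasureTheory.Measure.restrict_restrict measurableSet_Iic, hset]

end GaussianAux

namespace VAProof

variable {Ω : Type*} [mΩ : MeasurableSpace Ω]

/-- drift of the exponent of `Z` -/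
def aC (S : VASetting Ω) : ℝ := S.alpha - S.sigma ^ 2 / 2

/-- `e1 s ω = exp(a s + σ W_s)`, so that `Z^z_s = z · e1 s`. -/
def e1 (S : VASetting Ω) (s : ℝ) (ω : Ω) : ℝ := Real.exp (aC S * s + S.sigma * S.W s ω)

/-- clamp of `ℝ` onto `[0,T]` -/
def cl (S : VASetting Ω) (x : ℝ) : ℝ := max 0 (min x S.T)

/-- measurable/continuous modification of `μ` -/
def muN (S : VASetting Ω) (x : ℝ) : ℝ := S.mu (max 0 x)

/-- continuous modification of `f` -/
def fN (S : VASetting Ω) (x : ℝ) : ℝ :=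
  S.k (cl S x) * (S.c + muN S x) - derivWithin S.k (Set.Icc 0 S.T) (cl S x) - S.c

/-- continuous modification of the survival probability -/
def survN (S : VASetting Ω) (t s : ℝ) : ℝ := Real.exp (-(∫ u in (0:ℝ)..s, muN S (t + u)))

/-- deterministic part of the running payoff -/
def AA (S : VASetting Ω) (t s : ℝ) : ℝ := Real.exp (-S.c * s) * survN S t s * fN S (t + s)

/-- deterministic factor of the stochastic part of the running payoff -/
def BB (S : VASetting Ω) (t s : ℝ) : ℝ := Real.exp (-S.c * s) * survN S t s * muN S (t + s)

/-- primitive of `AA` -/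
def phi (S : VASetting Ω) (t x : ℝ) : ℝ := ∫ s in (0:ℝ)..x, AA S t s

/-- stochastic part of the running payoff, in indicator form -/
def QI (S : VASetting Ω) (t z : ℝ) (τ : Ω → ℝ) (ω : Ω) : ℝ :=
  ∫ s in Set.Ioc (0:ℝ) (S.T - t),
    (if s ≤ τ ω then BB S t s * max (z * e1 S s ω - 1) 0 else 0)

/-- terminal payoff -/
def termN (S : VASetting Ω) (t z : ℝ) (τ : Ω → ℝ) (ω : Ω) : ℝ :=
  if τ ω = S.T - t then
    Real.exp (-S.c * (S.T - t)) * survN S t (S.T - t) * max (z * e1 S (S.T - t) ω - 1) 0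
  else 0

/-- nice version of the payoff -/
def pN (S : VASetting Ω) (t z : ℝ) (τ : Ω → ℝ) (ω : Ω) : ℝ :=
  phi S t (τ ω) + QI S t z τ ω + termN S t z τ ω

/-- pathwise time-integral of `e1`, dominating the stochastic payoff -/
def YY (S : VASetting Ω) (t : ℝ) (ω : Ω) : ℝ := ∫ s in Set.Ioc (0:ℝ) (S.T - t), e1 S s ω

variable (S : VASetting Ω)

lemma Z_eq (z s : ℝ) (ω : Ω) : S.Z z s ω = z * e1 S s ω := rfl

lemma e1_pos (s : ℝ) (ω : Ω) : 0 < e1 S s ω := Real.exp_pos _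

lemma cont_e1 (ω : Ω) : Continuous fun s => e1 S s ω :=
  Real.continuous_exp.comp
    ((continuous_const.mul continuous_id).add (continuous_const.mul (S.hWcont ω)))

lemma meas_e1 (s : ℝ) : Measurable (e1 S s) :=
  Real.measurable_exp.comp (measurable_const.add ((S.hWmeas s).const_mul S.sigma))

lemma meas_joint_aux (f : ℝ → Ω → ℝ) (hc : ∀ ω, Continuous fun s => f s ω)
    (hm : ∀ s, Measurable (f s)) : Measurable fun p : Ω × ℝ => f p.2 p.1 := by
  have h : Measurable (Function.uncurry f) :=
    measurable_uncurry_of_continuous_of_measurable hc hm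
  exact h.comp measurable_swap

lemma meas_e1_joint : Measurable fun p : Ω × ℝ => e1 S p.2 p.1 :=
  meas_joint_aux (e1 S) (cont_e1 S) (meas_e1 S)

lemma cl_mem (x : ℝ) : cl S x ∈ Set.Icc (0:ℝ) S.T :=
  ⟨le_max_left _ _, max_le S.hT.le (min_le_right _ _)⟩

lemma cl_eq {x : ℝ} (hx : x ∈ Set.Icc (0:ℝ) S.T) : cl S x = x := by
  rw [cl, min_eq_left hx.2, max_eq_right hx.1]

lemma cont_cl : Continuous (cl S) :=
  continuous_const.max (continuous_id.min continuous_const)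

lemma cont_muN : Continuous (muN S) :=
  (S.hmu_smooth.continuousOn).comp_continuous (continuous_const.max continuous_id)
    (fun x => Set.mem_Ici.2 (le_max_left _ _))

lemma muN_nonneg (x : ℝ) : 0 ≤ muN S x := S.hmu_nonneg _ (le_max_left _ _)

lemma muN_eq {x : ℝ} (hx : 0 ≤ x) : muN S x = S.mu x := by
  rw [muN, max_eq_right hx]

lemma cont_fN : Continuous (fN S) := by
  have hk : Continuous fun x => S.k (cl S x) :=
    (S.hk_smooth.continuousOn).comp_continuous (cont_cl S) (cl_mem S)
  have hd : Continuous fun x => derivWithin S.k (Set.Icc 0 S.T) (cl S x) :=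
    (S.hk_smooth.continuousOn_derivWithin (uniqueDiffOn_Icc S.hT) one_le_two).comp_continuous
      (cont_cl S) (cl_mem S)
  exact ((hk.mul (continuous_const.add (cont_muN S))).sub hd).sub continuous_const

lemma fN_eq {x : ℝ} (hx : x ∈ Set.Ioo (0:ℝ) S.T) : fN S x = S.f x := by
  have hxI : x ∈ Set.Icc (0:ℝ) S.T := ⟨hx.1.le, hx.2.le⟩
  rw [fN, VASetting.f, cl_eq S hxI, muN_eq S hx.1.le,
    derivWithin_of_mem_nhds (Icc_mem_nhds hx.1 hx.2)]

lemma cont_survN (t : ℝ) : Continuous (survN S t) := by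
  have h : Continuous fun s => ∫ u in (0:ℝ)..s, muN S (t + u) :=
    intervalIntegral.continuous_primitive
      (fun a b => ((cont_muN S).comp (continuous_const.add continuous_id)).intervalIntegrable a b) 0
  exact Real.continuous_exp.comp h.neg

lemma survN_pos (t s : ℝ) : 0 < survN S t s := Real.exp_pos _

lemma survN_le_one (t : ℝ) {s : ℝ} (hs : 0 ≤ s) : survN S t s ≤ 1 := by
  rw [survN]
  have h : 0 ≤ ∫ u in (0:ℝ)..s, muN S (t + u) :=
    intervalIntegral.integral_nonneg hs (fun u _ => muN_nonneg S _)
  calc Real.exp (-(∫ u in (0:ℝ)..s, muN S (t + u))) ≤ Real.exp 0 :=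
        Real.exp_le_exp.2 (by linarith)
    _ = 1 := Real.exp_zero

lemma surv_eq {t s : ℝ} (ht : 0 ≤ t) (hs : 0 ≤ s) : S.surv t s = survN S t s := by
  rw [VASetting.surv, survN]
  congr 2
  apply intervalIntegral.integral_congr
  intro u hu
  rw [Set.uIcc_of_le hs] at hu
  exact (muN_eq S (by linarith [hu.1] : (0:ℝ) ≤ t + u)).symm

lemma cont_AA (t : ℝ) : Continuous (AA S t) := by
  unfold AA
  exact ((Real.continuous_exp.comp (continuous_const.mul continuous_id)).mul
    (cont_survN S t)).mul ((cont_fN S).comp (continuous_const.add continuous_id))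

lemma cont_BB (t : ℝ) : Continuous (BB S t) := by
  unfold BB
  exact ((Real.continuous_exp.comp (continuous_const.mul continuous_id)).mul
    (cont_survN S t)).mul ((cont_muN S).comp (continuous_const.add continuous_id))

lemma BB_nonneg (t s : ℝ) : 0 ≤ BB S t s :=
  mul_nonneg (mul_nonneg (Real.exp_pos _).le (survN_pos S t s).le) (muN_nonneg S _)

lemma expsurv_le_one (t : ℝ) {s : ℝ} (hs : 0 ≤ s) :
    Real.exp (-S.c * s) * survN S t s ≤ 1 := by
  have h1 : Real.exp (-S.c * s) ≤ 1 := by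
    calc Real.exp (-S.c * s) ≤ Real.exp 0 :=
          Real.exp_le_exp.2 (by nlinarith [S.hc])
      _ = 1 := Real.exp_zero
  have h2 := survN_le_one S t hs
  nlinarith [(survN_pos S t s).le, Real.exp_pos (-S.c * s)]

lemma cont_phi (t : ℝ) : Continuous (phi S t) :=
  intervalIntegral.continuous_primitive (fun a b => (cont_AA S t).intervalIntegrable a b) 0

lemma exp_W_map {s : ℝ} (hs : 0 ≤ s) :
    Measure.map (S.W s) S.P = gaussianReal 0 (Real.toNNReal s) := by
  have h := S.hWgauss 0 s le_rfl hs
  have hfun : (fun ω => S.W s ω - S.W 0 ω) = S.W s := by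
    funext ω; rw [S.hW0, sub_zero]
  rwa [hfun, sub_zero] at h

lemma exp_W_integrable {s : ℝ} (hs : 0 ≤ s) :
    Integrable (fun ω => Real.exp (S.sigma * S.W s ω)) S.P := by
  have hint := integrable_exp_mul_gaussianReal S.sigma (Real.toNNReal s)
  rw [← exp_W_map S hs] at hint
  have hg : AEStronglyMeasurable (fun x => Real.exp (S.sigma * x))
      (Measure.map (S.W s) S.P) :=
    (Real.continuous_exp.comp (continuous_const.mul continuous_id)).aestronglyMeasurable
  exact (integrable_map_measure hg (S.hWmeas s).aemeasurable).mp hint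

lemma exp_W_integral {s : ℝ} (hs : 0 ≤ s) :
    ∫ ω, Real.exp (S.sigma * S.W s ω) ∂S.P = Real.exp (S.sigma ^ 2 * s / 2) := by
  have hg : AEStronglyMeasurable (fun x => Real.exp (S.sigma * x))
      (Measure.map (S.W s) S.P) :=
    (Real.continuous_exp.comp (continuous_const.mul continuous_id)).aestronglyMeasurable
  have h := integral_map (S.hWmeas s).aemeasurable hg
  rw [exp_W_map S hs, integral_exp_mul_gaussianReal] at h
  rw [← h, Real.coe_toNNReal s hs]

lemma e1_int {s : ℝ} (hs : 0 ≤ s) : Integrable (fun ω => e1 S s ω) S.P := by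
  have h := (exp_W_integrable S hs).const_mul (Real.exp (aC S * s))
  have heq : (fun ω => Real.exp (aC S * s) * Real.exp (S.sigma * S.W s ω))
      = fun ω => e1 S s ω := by
    funext ω; rw [← Real.exp_add]; rfl
  rwa [heq] at h

lemma e1_integral {s : ℝ} (hs : 0 ≤ s) :
    ∫ ω, e1 S s ω ∂S.P = Real.exp (aC S * s) * Real.exp (S.sigma ^ 2 * s / 2) := by
  have heq : (fun ω => e1 S s ω)
      = fun ω => Real.exp (aC S * s) * Real.exp (S.sigma * S.W s ω) := by
    funext ω; rw [← Real.exp_add]; rfl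
  rw [heq, MeasureTheory.integral_const_mul, exp_W_integral S hs]

lemma YY_nonneg (t : ℝ) (ω : Ω) : 0 ≤ YY S t ω :=
  MeasureTheory.integral_nonneg fun s => (e1_pos S s ω).le

lemma YY_int (t : ℝ) : Integrable (YY S t) S.P := by
  haveI := S.probP
  have hjoint : AEStronglyMeasurable (fun p : Ω × ℝ => e1 S p.2 p.1)
      (S.P.prod (volume.restrict (Set.Ioc 0 (S.T - t)))) :=
    (meas_e1_joint S).aestronglyMeasurable
  have hprod : Integrable (fun p : Ω × ℝ => e1 S p.2 p.1)
      (S.P.prod (volume.restrict (Set.Ioc 0 (S.T - t)))) := by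
    rw [integrable_prod_iff' hjoint]
    constructor
    · filter_upwards [self_mem_ae_restrict (measurableSet_Ioc :
        MeasurableSet (Set.Ioc (0:ℝ) (S.T - t)))] with s hs
      exact e1_int S hs.1.le
    · have hcont : Integrable (fun s => Real.exp ((aC S + S.sigma ^ 2 / 2) * s))
          (volume.restrict (Set.Ioc (0:ℝ) (S.T - t))) :=
        (Real.continuous_exp.comp (continuous_const.mul continuous_id)).integrableOn_Ioc
      apply hcont.congr
      filter_upwards [self_mem_ae_restrict (measurableSet_Ioc :
        MeasurableSet (Set.Ioc (0:ℝ) (S.T - t)))] with s hs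
      have h1 : (∫ ω, ‖e1 S s ω‖ ∂S.P) = ∫ ω, e1 S s ω ∂S.P := by
        apply MeasureTheory.integral_congr_ae
        exact Filter.Eventually.of_forall fun ω => Real.norm_of_nonneg (e1_pos S s ω).le
      rw [h1, e1_integral S hs.1.le, ← Real.exp_add]
      congr 1
      ring
  exact hprod.integral_prod_left

lemma adm_meas {t : ℝ} {τ : Ω → ℝ} (hτ : S.isAdmissible t τ) : Measurable τ := by
  apply measurable_of_Iic
  intro x
  have h := S.F.le x _ (hτ.1 x)
  simp only [WithTop.coe_le_coe] at h
  exact h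

lemma QI_nonneg (t z : ℝ) (τ : Ω → ℝ) (ω : Ω) : 0 ≤ QI S t z τ ω := by
  apply MeasureTheory.integral_nonneg
  intro s
  dsimp only
  split_ifs
  · exact mul_nonneg (BB_nonneg S t s) (le_max_right _ _)
  · exact le_rfl

lemma termN_nonneg (t z : ℝ) (τ : Ω → ℝ) (ω : Ω) : 0 ≤ termN S t z τ ω := by
  rw [termN]
  split_ifs
  · exact mul_nonneg (mul_nonneg (Real.exp_pos _).le (survN_pos S t _).le) (le_max_right _ _)
  · exact le_rfl

lemma max_le_abs_mul (z e : ℝ) (he : 0 < e) : max (z * e - 1) 0 ≤ |z| * e := by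
  apply max_le
  · have h1 : z * e ≤ |z| * e := mul_le_mul_of_nonneg_right (le_abs_self z) he.le
    linarith
  · exact mul_nonneg (abs_nonneg z) he.le

lemma QI_integrand_integrableOn (t z : ℝ) (τ : Ω → ℝ) (ω : Ω) :
    IntegrableOn (fun s => if s ≤ τ ω then BB S t s * max (z * e1 S s ω - 1) 0 else 0)
      (Set.Ioc (0:ℝ) (S.T - t)) volume := by
  have heq : (fun s => if s ≤ τ ω then BB S t s * max (z * e1 S s ω - 1) 0 else 0)
      = Set.indicator (Set.Iic (τ ω)) (fun s => BB S t s * max (z * e1 S s ω - 1) 0) := by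
    funext s; simp [Set.indicator_apply, Set.mem_Iic]
  rw [heq]
  exact (((cont_BB S t).mul (((continuous_const.mul (cont_e1 S ω)).sub
    continuous_const).max continuous_const)).integrableOn_Ioc).indicator measurableSet_Iic

lemma QI_le (t : ℝ) {z MB : ℝ} (hMB : ∀ x ∈ Set.Icc (0:ℝ) (S.T - t), BB S t x ≤ MB)
    (τ : Ω → ℝ) (ω : Ω) : QI S t z τ ω ≤ MB * (|z| * YY S t ω) := by
  have hint2 : IntegrableOn (fun s => MB * (|z| * e1 S s ω)) (Set.Ioc (0:ℝ) (S.T - t)) volume :=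
    (continuous_const.mul (continuous_const.mul (cont_e1 S ω))).integrableOn_Ioc
  have h : QI S t z τ ω ≤ ∫ s in Set.Ioc (0:ℝ) (S.T - t), MB * (|z| * e1 S s ω) := by
    apply MeasureTheory.setIntegral_mono_on (QI_integrand_integrableOn S t z τ ω) hint2
      measurableSet_Ioc
    intro s hs
    have hMB0 : 0 ≤ MB := (BB_nonneg S t s).trans (hMB s ⟨hs.1.le, hs.2⟩)
    split_ifs
    · exact mul_le_mul (hMB s ⟨hs.1.le, hs.2⟩) (max_le_abs_mul z _ (e1_pos S s ω))
        (le_max_right _ _) hMB0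
    · exact mul_nonneg hMB0 (mul_nonneg (abs_nonneg z) (e1_pos S s ω).le)
  refine h.trans (le_of_eq ?_)
  rw [MeasureTheory.integral_const_mul, MeasureTheory.integral_const_mul]
  rfl

lemma termN_le {t : ℝ} (ht : t ≤ S.T) (z : ℝ) (τ : Ω → ℝ) (ω : Ω) :
    termN S t z τ ω ≤ |z| * e1 S (S.T - t) ω := by
  rw [termN]
  have hu1 : (0:ℝ) ≤ S.T - t := sub_nonneg.2 ht
  split_ifs
  · calc Real.exp (-S.c * (S.T - t)) * survN S t (S.T - t) * max (z * e1 S (S.T - t) ω - 1) 0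
        ≤ 1 * (|z| * e1 S (S.T - t) ω) := by
          apply mul_le_mul (expsurv_le_one S t hu1)
            (max_le_abs_mul z _ (e1_pos S _ ω)) (le_max_right _ _) zero_le_one
      _ = |z| * e1 S (S.T - t) ω := one_mul _
  · exact mul_nonneg (abs_nonneg z) (e1_pos S _ ω).le

lemma phi_abs_le {t : ℝ} {MA : ℝ} (hMA : ∀ y ∈ Set.Icc (0:ℝ) (S.T - t), ‖AA S t y‖ ≤ MA)
    {x : ℝ} (hx : x ∈ Set.Icc (0:ℝ) (S.T - t)) : |phi S t x| ≤ MA * (S.T - t) := by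
  have hMA0 : 0 ≤ MA := (norm_nonneg _).trans (hMA 0 ⟨le_rfl, hx.1.trans hx.2⟩)
  have h := intervalIntegral.norm_integral_le_of_norm_le_const (C := MA) (f := AA S t)
    (a := 0) (b := x) ?_
  · rw [Real.norm_eq_abs] at h
    calc |phi S t x| ≤ MA * |x - 0| := h
      _ = MA * x := by rw [sub_zero, abs_of_nonneg hx.1]
      _ ≤ MA * (S.T - t) := mul_le_mul_of_nonneg_left hx.2 hMA0
  · intro y hy
    rw [Set.uIoc_of_le hx.1] at hy
    exact hMA y ⟨hy.1.le, hy.2.trans hx.2⟩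

lemma pN_abs_le {t : ℝ} (ht : t ∈ Set.Icc (0:ℝ) S.T) {τ : Ω → ℝ} (hτ : S.isAdmissible t τ)
    {z MA MB : ℝ} (hMA : ∀ y ∈ Set.Icc (0:ℝ) (S.T - t), ‖AA S t y‖ ≤ MA)
    (hMB : ∀ x ∈ Set.Icc (0:ℝ) (S.T - t), BB S t x ≤ MB) (ω : Ω) :
    |pN S t z τ ω| ≤ MA * (S.T - t) + |z| * (MB * YY S t ω + e1 S (S.T - t) ω) := by
  have h1 : |phi S t (τ ω)| ≤ MA * (S.T - t) := phi_abs_le S hMA (hτ.2 ω)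
  have h2 : |QI S t z τ ω| ≤ MB * (|z| * YY S t ω) := by
    rw [abs_of_nonneg (QI_nonneg S t z τ ω)]
    exact QI_le S t hMB τ ω
  have h3 : |termN S t z τ ω| ≤ |z| * e1 S (S.T - t) ω := by
    rw [abs_of_nonneg (termN_nonneg S t z τ ω)]
    exact termN_le S ht.2 z τ ω
  calc |pN S t z τ ω| ≤ |phi S t (τ ω)| + |QI S t z τ ω| + |termN S t z τ ω| := by
        rw [pN]; exact (abs_add_le _ _).trans (add_le_add_left (abs_add_le _ _) _)
    _ ≤ MA * (S.T - t) + MB * (|z| * YY S t ω) + |z| * e1 S (S.T - t) ω := by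
        exact add_le_add (add_le_add h1 h2) h3
    _ = MA * (S.T - t) + |z| * (MB * YY S t ω + e1 S (S.T - t) ω) := by ring

lemma meas_QI (t z : ℝ) {τ : Ω → ℝ} (hτm : Measurable τ) :
    Measurable fun ω => QI S t z τ ω := by
  have hm : Measurable fun p : Ω × ℝ => e1 S p.2 p.1 := meas_e1_joint S
  have joint : StronglyMeasurable fun p : Ω × ℝ =>
      (if p.2 ≤ τ p.1 then BB S t p.2 * max (z * e1 S p.2 p.1 - 1) 0 else 0) := by
    apply Measurable.stronglyMeasurable
    refine Measurable.ite ?_ ?_ measurable_const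
    · exact measurableSet_le measurable_snd (hτm.comp measurable_fst)
    · exact ((cont_BB S t).measurable.comp measurable_snd).mul
        (((hm.const_mul z).sub measurable_const).max measurable_const)
  exact joint.integral_prod_right'.measurable

lemma meas_termN (t z : ℝ) {τ : Ω → ℝ} (hτm : Measurable τ) :
    Measurable fun ω => termN S t z τ ω := by
  refine Measurable.ite ?_ ?_ measurable_const
  · exact hτm (measurableSet_singleton (S.T - t))
  · exact ((((meas_e1 S (S.T - t)).const_mul z).sub measurable_const).max
      measurable_const).const_mul _

lemma meas_pN (t z : ℝ) {τ : Ω → ℝ} (hτm : Measurable τ) : Measurable (pN S t z τ) :=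
  (((cont_phi S t).measurable.comp hτm).add (meas_QI S t z hτm)).add (meas_termN S t z hτm)

lemma pN_integrable {t : ℝ} (ht : t ∈ Set.Icc (0:ℝ) S.T) {τ : Ω → ℝ}
    (hτ : S.isAdmissible t τ) (z : ℝ) : Integrable (pN S t z τ) S.P := by
  haveI := S.probP
  have hu1 : (0:ℝ) ≤ S.T - t := sub_nonneg.2 ht.2
  obtain ⟨MA, hMA⟩ := (isCompact_Icc (a := (0:ℝ)) (b := S.T - t)).exists_bound_of_continuousOn
    (cont_AA S t).continuousOn
  obtain ⟨MB, hMB'⟩ := (isCompact_Icc (a := (0:ℝ)) (b := S.T - t)).exists_bound_of_continuousOn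
    (cont_BB S t).continuousOn
  have hMB : ∀ x ∈ Set.Icc (0:ℝ) (S.T - t), BB S t x ≤ MB := fun x hx =>
    (le_abs_self _).trans (by simpa [Real.norm_eq_abs] using hMB' x hx)
  refine Integrable.mono'
    (g := fun ω => MA * (S.T - t) + |z| * (MB * YY S t ω + e1 S (S.T - t) ω)) ?_
    ((meas_pN S t z (adm_meas S hτ)).aestronglyMeasurable) (Filter.Eventually.of_forall fun ω => ?_)
  · exact (integrable_const _).add
      ((((YY_int S t).const_mul MB).add (e1_int S hu1)).const_mul (|z|))
  · rw [Real.norm_eq_abs]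
    exact pN_abs_le S ht hτ hMA hMB ω

lemma payoff_eq_pN {t : ℝ} (ht : t ∈ Set.Icc (0:ℝ) S.T) {τ : Ω → ℝ}
    (hτ : S.isAdmissible t τ) (z : ℝ) (ω : Ω) : S.payoff t z τ ω = pN S t z τ ω := by
  obtain ⟨h0, hu⟩ := hτ.2 ω
  have ht0 : (0:ℝ) ≤ t := ht.1
  have hterm : (if τ ω = S.T - t then Real.exp (-S.c * (S.T - t)) * S.surv t (S.T - t) *
      max (S.Z z (S.T - t) ω - 1) 0 else 0) = termN S t z τ ω := by
    rw [termN]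
    rcases eq_or_ne (τ ω) (S.T - t) with h | h
    · rw [if_pos h, if_pos h, surv_eq S ht0 (sub_nonneg.2 ht.2), Z_eq]
    · rw [if_neg h, if_neg h]
  have hint : (∫ s in (0:ℝ)..(τ ω), Real.exp (-S.c * s) * S.surv t s *
      (S.f (t + s) + S.mu (t + s) * max (S.Z z s ω - 1) 0))
      = phi S t (τ ω) + QI S t z τ ω := by
    have hmid : (∫ s in (0:ℝ)..(τ ω), Real.exp (-S.c * s) * S.surv t s *
        (S.f (t + s) + S.mu (t + s) * max (S.Z z s ω - 1) 0))
        = ∫ s in (0:ℝ)..(τ ω), (AA S t s + BB S t s * max (z * e1 S s ω - 1) 0) := by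
      apply intervalIntegral.integral_congr_ae
      filter_upwards [ae_ne_const (S.T - t)] with s hs hmem
      rw [Set.uIoc_of_le h0] at hmem
      have hs0 : (0:ℝ) < s := hmem.1
      have hts : t + s ∈ Set.Ioo (0:ℝ) S.T := by
        constructor
        · linarith
        · have hle : t + s ≤ S.T := by linarith [hmem.2.trans hu]
          exact lt_of_le_of_ne hle (fun hEq => hs (by linarith))
      rw [surv_eq S ht0 hs0.le, AA, BB, fN_eq S hts, muN_eq S (by linarith : (0:ℝ) ≤ t + s),
        Z_eq]
      ring
    rw [hmid, intervalIntegral.integral_add (f := AA S t)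
      (g := fun s => BB S t s * max (z * e1 S s ω - 1) 0) ((cont_AA S t).intervalIntegrable _ _)
      (((cont_BB S t).mul (((continuous_const.mul (cont_e1 S ω)).sub
        continuous_const).max continuous_const)).intervalIntegrable _ _)]
    rw [phi, QI]
    congr 1
    exact indicator_intervalIntegral_eq _ h0 hu
  rw [VASetting.payoff, pN, hint, hterm]

lemma QI_mono (t : ℝ) {z1 z2 : ℝ} (h : z1 ≤ z2) (τ : Ω → ℝ) (ω : Ω) :
    QI S t z1 τ ω ≤ QI S t z2 τ ω := by
  apply MeasureTheory.setIntegral_mono_on (QI_integrand_integrableOn S t z1 τ ω)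
    (QI_integrand_integrableOn S t z2 τ ω) measurableSet_Ioc
  intro s _
  split_ifs
  · apply mul_le_mul_of_nonneg_left _ (BB_nonneg S t s)
    apply max_le_max _ le_rfl
    have := mul_le_mul_of_nonneg_right h (e1_pos S s ω).le
    linarith
  · exact le_rfl

lemma termN_mono (t : ℝ) {z1 z2 : ℝ} (h : z1 ≤ z2) (τ : Ω → ℝ) (ω : Ω) :
    termN S t z1 τ ω ≤ termN S t z2 τ ω := by
  rw [termN, termN]
  split_ifs
  · apply mul_le_mul_of_nonneg_left _
      (mul_nonneg (Real.exp_pos _).le (survN_pos S t _).le)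
    apply max_le_max _ le_rfl
    have := mul_le_mul_of_nonneg_right h (e1_pos S (S.T - t) ω).le
    linarith
  · exact le_rfl

lemma pN_mono (t : ℝ) {z1 z2 : ℝ} (h : z1 ≤ z2) (τ : Ω → ℝ) (ω : Ω) :
    pN S t z1 τ ω ≤ pN S t z2 τ ω := by
  rw [pN, pN]
  exact add_le_add (add_le_add le_rfl (QI_mono S t h τ ω)) (termN_mono S t h τ ω)

lemma max_convex (z1 z2 e θ θ' : ℝ) (he : 0 < e) (hθ : 0 ≤ θ) (hθ' : 0 ≤ θ')
    (hab : θ + θ' = 1) :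
    max ((θ * z1 + θ' * z2) * e - 1) 0 ≤ θ * max (z1 * e - 1) 0 + θ' * max (z2 * e - 1) 0 := by
  apply max_le
  · have hkey : (θ * z1 + θ' * z2) * e - 1 = θ * (z1 * e - 1) + θ' * (z2 * e - 1) := by
      have h : θ * (z1 * e - 1) + θ' * (z2 * e - 1)
          = (θ * z1 + θ' * z2) * e - (θ + θ') := by ring
      rw [h, hab]
    rw [hkey]
    exact add_le_add (mul_le_mul_of_nonneg_left (le_max_left _ _) hθ)
      (mul_le_mul_of_nonneg_left (le_max_left _ _) hθ')
  · positivity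

lemma QI_convex (t : ℝ) (z1 z2 θ θ' : ℝ) (hθ : 0 ≤ θ) (hθ' : 0 ≤ θ') (hab : θ + θ' = 1)
    (τ : Ω → ℝ) (ω : Ω) :
    QI S t (θ * z1 + θ' * z2) τ ω ≤ θ * QI S t z1 τ ω + θ' * QI S t z2 τ ω := by
  have h1 := QI_integrand_integrableOn S t z1 τ ω
  have h2 := QI_integrand_integrableOn S t z2 τ ω
  have hstep : QI S t (θ * z1 + θ' * z2) τ ω ≤ ∫ s in Set.Ioc (0:ℝ) (S.T - t),
      (θ * (if s ≤ τ ω then BB S t s * max (z1 * e1 S s ω - 1) 0 else 0)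
       + θ' * (if s ≤ τ ω then BB S t s * max (z2 * e1 S s ω - 1) 0 else 0)) := by
    apply MeasureTheory.setIntegral_mono_on
      (QI_integrand_integrableOn S t (θ * z1 + θ' * z2) τ ω)
      ((h1.const_mul θ).add (h2.const_mul θ')) measurableSet_Ioc
    intro s _
    simp only [Pi.add_apply]
    split_ifs
    · have hkey := max_convex z1 z2 (e1 S s ω) θ θ' (e1_pos S s ω) hθ hθ' hab
      calc BB S t s * max ((θ * z1 + θ' * z2) * e1 S s ω - 1) 0
          ≤ BB S t s * (θ * max (z1 * e1 S s ω - 1) 0 + θ' * max (z2 * e1 S s ω - 1) 0) :=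
            mul_le_mul_of_nonneg_left hkey (BB_nonneg S t s)
        _ = θ * (BB S t s * max (z1 * e1 S s ω - 1) 0)
            + θ' * (BB S t s * max (z2 * e1 S s ω - 1) 0) := by ring
    · simp
  refine hstep.trans (le_of_eq ?_)
  rw [MeasureTheory.integral_add (h1.const_mul θ) (h2.const_mul θ'),
    MeasureTheory.integral_const_mul, MeasureTheory.integral_const_mul]
  rfl

lemma termN_convex (t : ℝ) (z1 z2 θ θ' : ℝ) (hθ : 0 ≤ θ) (hθ' : 0 ≤ θ') (hab : θ + θ' = 1)
    (τ : Ω → ℝ) (ω : Ω) :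
    termN S t (θ * z1 + θ' * z2) τ ω ≤ θ * termN S t z1 τ ω + θ' * termN S t z2 τ ω := by
  rw [termN, termN, termN]
  split_ifs
  · have hkey := max_convex z1 z2 (e1 S (S.T - t) ω) θ θ' (e1_pos S _ ω) hθ hθ' hab
    have hκ : 0 ≤ Real.exp (-S.c * (S.T - t)) * survN S t (S.T - t) :=
      mul_nonneg (Real.exp_pos _).le (survN_pos S t _).le
    calc Real.exp (-S.c * (S.T - t)) * survN S t (S.T - t)
          * max ((θ * z1 + θ' * z2) * e1 S (S.T - t) ω - 1) 0
        ≤ Real.exp (-S.c * (S.T - t)) * survN S t (S.T - t)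
          * (θ * max (z1 * e1 S (S.T - t) ω - 1) 0 + θ' * max (z2 * e1 S (S.T - t) ω - 1) 0) :=
          mul_le_mul_of_nonneg_left hkey hκ
      _ = θ * (Real.exp (-S.c * (S.T - t)) * survN S t (S.T - t)
            * max (z1 * e1 S (S.T - t) ω - 1) 0)
          + θ' * (Real.exp (-S.c * (S.T - t)) * survN S t (S.T - t)
            * max (z2 * e1 S (S.T - t) ω - 1) 0) := by ring
  · simp

lemma pN_convex (t : ℝ) (z1 z2 θ θ' : ℝ) (hθ : 0 ≤ θ) (hθ' : 0 ≤ θ') (hab : θ + θ' = 1)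
    (τ : Ω → ℝ) (ω : Ω) :
    pN S t (θ * z1 + θ' * z2) τ ω ≤ θ * pN S t z1 τ ω + θ' * pN S t z2 τ ω := by
  have hφ : phi S t (τ ω) = θ * phi S t (τ ω) + θ' * phi S t (τ ω) := by
    have : θ * phi S t (τ ω) + θ' * phi S t (τ ω) = (θ + θ') * phi S t (τ ω) := by ring
    rw [this, hab, one_mul]
  rw [pN, pN, pN]
  calc phi S t (τ ω) + QI S t (θ * z1 + θ' * z2) τ ω + termN S t (θ * z1 + θ' * z2) τ ω
      ≤ phi S t (τ ω) + (θ * QI S t z1 τ ω + θ' * QI S t z2 τ ω)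
        + (θ * termN S t z1 τ ω + θ' * termN S t z2 τ ω) :=
        add_le_add (add_le_add le_rfl (QI_convex S t z1 z2 θ θ' hθ hθ' hab τ ω))
          (termN_convex S t z1 z2 θ θ' hθ hθ' hab τ ω)
    _ = θ * (phi S t (τ ω) + QI S t z1 τ ω + termN S t z1 τ ω)
        + θ' * (phi S t (τ ω) + QI S t z2 τ ω + termN S t z2 τ ω) := by
        linear_combination (-(phi S t (τ ω))) * hab

lemma tstar_nonneg : 0 ≤ S.tstar := by
  rw [VASetting.tstar]
  apply le_csInf ⟨S.T, Set.mem_union_right _ (Set.mem_singleton _)⟩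
  rintro x (hx | hx)
  · exact hx.1.1
  · rw [Set.mem_singleton_iff] at hx
    rw [hx]
    exact S.hT.le

lemma tstar_le_T : S.tstar ≤ S.T := by
  rw [VASetting.tstar]
  apply csInf_le
  · refine ⟨0, ?_⟩
    rintro x (hx | hx)
    · exact hx.1.1
    · rw [Set.mem_singleton_iff] at hx
      rw [hx]
      exact S.hT.le
  · exact Set.mem_union_right _ (Set.mem_singleton _)

end VAProof

open VAProof

/-- Lemma 4.2: monotonicity, convexity, growth at infinity and the
limit at zero of `z ↦ w(t,z)`. -/
theorem w_monotone_convex_and_limits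
    {Ω : Type*} [mΩ : MeasurableSpace Ω] (S : VASetting Ω) (hA2 : S.Assumption2) :
    ∀ t ∈ Set.Icc (0:ℝ) S.T,
      MonotoneOn (fun z => S.w t z) (Set.Ioi 0) ∧
      ConvexOn ℝ (Set.Ioi 0) (fun z => S.w t z) ∧
      Filter.Tendsto (fun z => S.w t z) Filter.atTop Filter.atTop ∧
      Filter.Tendsto (fun z => S.w t z) (nhdsWithin (0:ℝ) (Set.Ioi 0))
        (nhds (if t < S.tstar then
          ∫ s in (0:ℝ)..(S.tstar - t), Real.exp (-S.c * s) * S.surv t s * S.f (t + s)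
        else 0)) := by
  intro t ht
  haveI := S.probP
  obtain ⟨ht0, htT⟩ := ht
  have htI : t ∈ Set.Icc (0:ℝ) S.T := ⟨ht0, htT⟩
  have hu1 : (0:ℝ) ≤ S.T - t := sub_nonneg.2 htT
  obtain ⟨MA, hMA⟩ := (isCompact_Icc (a := (0:ℝ)) (b := S.T - t)).exists_bound_of_continuousOn
    (cont_AA S t).continuousOn
  obtain ⟨MB, hMB'⟩ := (isCompact_Icc (a := (0:ℝ)) (b := S.T - t)).exists_bound_of_continuousOn
    (cont_BB S t).continuousOn
  have hMB : ∀ x ∈ Set.Icc (0:ℝ) (S.T - t), BB S t x ≤ MB := fun x hx =>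
    (le_abs_self _).trans (by simpa [Real.norm_eq_abs] using hMB' x hx)
  set Az : ℝ → Set ℝ := fun z =>
    {x | ∃ τ : Ω → ℝ, S.isAdmissible t τ ∧ x = ∫ ω, S.payoff t z τ ω ∂S.P} with hAzdef
  have hw : ∀ z, S.w t z = sSup (Az z) := fun z => rfl
  have hpe : ∀ (z : ℝ) (τ : Ω → ℝ), S.isAdmissible t τ →
      (∫ ω, S.payoff t z τ ω ∂S.P) = ∫ ω, pN S t z τ ω ∂S.P := fun z τ hτ =>
    MeasureTheory.integral_congr_ae (Filter.Eventually.of_forall fun ω =>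
      payoff_eq_pN S htI hτ z ω)
  have hconst : ∀ u0 ∈ Set.Icc (0:ℝ) (S.T - t), S.isAdmissible t (fun _ => u0) :=
    fun u0 hu0 => ⟨isStoppingTime_const S.F u0, fun _ => hu0⟩
  have hmem : ∀ (z : ℝ), ∀ u0 ∈ Set.Icc (0:ℝ) (S.T - t),
      (∫ ω, pN S t z (fun _ => u0) ω ∂S.P) ∈ Az z := fun z u0 hu0 =>
    ⟨fun _ => u0, hconst u0 hu0, (hpe z _ (hconst u0 hu0)).symm⟩
  have hne : ∀ z : ℝ, (Az z).Nonempty := fun z => ⟨_, hmem z 0 ⟨le_rfl, hu1⟩⟩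
  have hdom_int : ∀ z : ℝ, Integrable
      (fun ω => MA * (S.T - t) + |z| * (MB * YY S t ω + e1 S (S.T - t) ω)) S.P :=
    fun z => (integrable_const _).add
      ((((YY_int S t).const_mul MB).add (e1_int S hu1)).const_mul (|z|))
  have hbdd : ∀ z : ℝ, BddAbove (Az z) := by
    intro z
    refine ⟨∫ ω, (MA * (S.T - t) + |z| * (MB * YY S t ω + e1 S (S.T - t) ω)) ∂S.P, ?_⟩
    rintro x ⟨τ, hτ, rfl⟩
    rw [hpe z τ hτ]
    apply MeasureTheory.integral_mono (pN_integrable S htI hτ z) (hdom_int z)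
    intro ω
    exact (le_abs_self _).trans (pN_abs_le S htI hτ hMA hMB ω)
  refine ⟨?_, ?_, ?_, ?_⟩
  · -- monotone
    intro z1 _ z2 _ h12
    show S.w t z1 ≤ S.w t z2
    rw [hw z1]
    apply csSup_le (hne z1)
    rintro x ⟨τ, hτ, rfl⟩
    rw [hpe z1 τ hτ]
    have h1 : (∫ ω, pN S t z1 τ ω ∂S.P) ≤ ∫ ω, pN S t z2 τ ω ∂S.P :=
      MeasureTheory.integral_mono (pN_integrable S htI hτ z1) (pN_integrable S htI hτ z2)
        (fun ω => pN_mono S t h12 τ ω)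
    refine h1.trans ?_
    rw [hw z2]
    exact le_csSup (hbdd z2) ⟨τ, hτ, (hpe z2 τ hτ).symm⟩
  · -- convex
    refine ⟨convex_Ioi 0, ?_⟩
    intro z1 _ z2 _ θ θ' hθ hθ' hab
    simp only [smul_eq_mul]
    show S.w t (θ * z1 + θ' * z2) ≤ θ * S.w t z1 + θ' * S.w t z2
    rw [hw]
    apply csSup_le (hne _)
    rintro x ⟨τ, hτ, rfl⟩
    rw [hpe _ τ hτ]
    have h1 : (∫ ω, pN S t (θ * z1 + θ' * z2) τ ω ∂S.P)
        ≤ ∫ ω, (θ * pN S t z1 τ ω + θ' * pN S t z2 τ ω) ∂S.P :=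
      MeasureTheory.integral_mono (pN_integrable S htI hτ _)
        (((pN_integrable S htI hτ z1).const_mul θ).add
          ((pN_integrable S htI hτ z2).const_mul θ'))
        (fun ω => pN_convex S t z1 z2 θ θ' hθ hθ' hab τ ω)
    refine h1.trans ?_
    rw [MeasureTheory.integral_add ((pN_integrable S htI hτ z1).const_mul θ)
      ((pN_integrable S htI hτ z2).const_mul θ'), MeasureTheory.integral_const_mul,
      MeasureTheory.integral_const_mul]
    have hw1 : (∫ ω, pN S t z1 τ ω ∂S.P) ≤ S.w t z1 := by
      rw [hw]; exact le_csSup (hbdd z1) ⟨τ, hτ, (hpe z1 τ hτ).symm⟩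
    have hw2 : (∫ ω, pN S t z2 τ ω ∂S.P) ≤ S.w t z2 := by
      rw [hw]; exact le_csSup (hbdd z2) ⟨τ, hτ, (hpe z2 τ hτ).symm⟩
    exact add_le_add (mul_le_mul_of_nonneg_left hw1 hθ) (mul_le_mul_of_nonneg_left hw2 hθ')
  · -- tendsto atTop
    set Ee1 : ℝ := Real.exp (aC S * (S.T - t)) * Real.exp (S.sigma ^ 2 * (S.T - t) / 2)
      with hEe1def
    have hEe1pos : 0 < Ee1 := mul_pos (Real.exp_pos _) (Real.exp_pos _)
    have hEe1A : (∫ ω, e1 S (S.T - t) ω ∂S.P) = Ee1 := by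
      rw [e1_integral S hu1]
    set κ : ℝ := Real.exp (-S.c * (S.T - t)) * survN S t (S.T - t) with hκdef
    have hκpos : 0 < κ := mul_pos (Real.exp_pos _) (survN_pos S t _)
    have hτT := hconst (S.T - t) ⟨hu1, le_rfl⟩
    have hlow : ∀ z : ℝ, phi S t (S.T - t) + κ * (z * Ee1 - 1) ≤ S.w t z := by
      intro z
      have hlowint : Integrable (fun ω => phi S t (S.T - t)
          + κ * (z * e1 S (S.T - t) ω - 1)) S.P :=
        (integrable_const _).add
          ((((e1_int S hu1).const_mul z).sub (integrable_const 1)).const_mul κ)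
      have hplow : ∀ ω, phi S t (S.T - t) + κ * (z * e1 S (S.T - t) ω - 1)
          ≤ pN S t z (fun _ => S.T - t) ω := by
        intro ω
        rw [pN]
        have hQ := QI_nonneg S t z (fun _ => S.T - t) ω
        have hterm : κ * (z * e1 S (S.T - t) ω - 1) ≤ termN S t z (fun _ => S.T - t) ω := by
          rw [termN, if_pos rfl, ← hκdef]
          exact mul_le_mul_of_nonneg_left (le_max_left _ _) hκpos.le
        linarith
      have hint : (∫ ω, (phi S t (S.T - t) + κ * (z * e1 S (S.T - t) ω - 1)) ∂S.P)
          = phi S t (S.T - t) + κ * (z * Ee1 - 1) := by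
        have hsub : Integrable (fun ω => z * e1 S (S.T - t) ω - 1) S.P :=
          ((e1_int S hu1).const_mul z).sub (integrable_const 1)
        have hg : Integrable (fun ω => κ * (z * e1 S (S.T - t) ω - 1)) S.P :=
          hsub.const_mul κ
        rw [MeasureTheory.integral_add (integrable_const _) hg,
          MeasureTheory.integral_const, MeasureTheory.integral_const_mul,
          MeasureTheory.integral_sub ((e1_int S hu1).const_mul z) (integrable_const 1),
          MeasureTheory.integral_const_mul, hEe1A, MeasureTheory.integral_const]
        simp [measure_univ]
      calc phi S t (S.T - t) + κ * (z * Ee1 - 1)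
          = ∫ ω, (phi S t (S.T - t) + κ * (z * e1 S (S.T - t) ω - 1)) ∂S.P := hint.symm
        _ ≤ ∫ ω, pN S t z (fun _ => S.T - t) ω ∂S.P :=
            MeasureTheory.integral_mono hlowint (pN_integrable S htI hτT z) hplow
        _ ≤ S.w t z := by
            rw [hw]; exact le_csSup (hbdd z) ⟨_, hτT, (hpe z _ hτT).symm⟩
    have htend : Filter.Tendsto (fun z : ℝ => phi S t (S.T - t) + κ * (z * Ee1 - 1))
        Filter.atTop Filter.atTop := by
      apply tendsto_atTop_add_const_left
      have h2 : Filter.Tendsto (fun z : ℝ => z * Ee1 - 1) Filter.atTop Filter.atTop := by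
        simpa [sub_eq_add_neg] using
          tendsto_atTop_add_const_right Filter.atTop (-1 : ℝ)
            (Filter.tendsto_id.atTop_mul_const hEe1pos)
      exact h2.const_mul_atTop hκpos
    exact tendsto_atTop_mono hlow htend
  · -- limit at zero
    set u0 : ℝ := min (max (S.tstar - t) 0) (S.T - t) with hu0def
    have hu0mem : u0 ∈ Set.Icc (0:ℝ) (S.T - t) :=
      ⟨le_min (le_max_right _ _) hu1, min_le_right _ _⟩
    have hcase : u0 = 0 ∨ t + u0 ≤ S.tstar := by
      rcases le_total (S.tstar - t) 0 with h | h
      · left; rw [hu0def, max_eq_right h, min_eq_left hu1]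
      · right
        calc t + u0 ≤ t + (S.tstar - t) := by
              gcongr
              rw [hu0def, max_eq_left h]
              exact min_le_left _ _
          _ = S.tstar := by ring
    have hphi_max : ∀ u ∈ Set.Icc (0:ℝ) (S.T - t), phi S t u ≤ phi S t u0 := by
      intro u hu
      rcases le_total u u0 with h | h
      · have hadd := intervalIntegral.integral_add_adjacent_intervals (μ := volume)
          ((cont_AA S t).intervalIntegrable 0 u) ((cont_AA S t).intervalIntegrable u u0)
        have hpos : 0 ≤ ∫ s in u..u0, AA S t s := by
          rcases hcase with h0 | h0
          · have hu00 : u = 0 := le_antisymm (h0 ▸ h) hu.1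
            rw [hu00, h0, intervalIntegral.integral_same]
          · apply intervalIntegral.integral_nonneg_of_ae_restrict h
            filter_upwards [ae_restrict_of_ae (μ := volume)
              ((ae_ne_const (0:ℝ)).and (ae_ne_const (S.T - t))),
              self_mem_ae_restrict (measurableSet_Icc :
                MeasurableSet (Set.Icc u u0))] with s hs hmem
            have hs0 : 0 < s := lt_of_le_of_ne (hu.1.trans hmem.1) (Ne.symm hs.1)
            have hsT : t + s < S.T := by
              have h1 : t + s ≤ t + u0 := by linarith [hmem.2]
              have h2 : t + u0 ≤ S.T := by linarith [hu0mem.2]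
              rcases eq_or_lt_of_le (h1.trans h2) with hEq | hlt
              · exact absurd (by linarith : s = S.T - t) hs.2
              · exact hlt
            have hfge : 0 ≤ S.f (t + s) :=
              hA2.1 (t + s) ⟨by linarith, by linarith [hmem.2]⟩
            rw [Pi.zero_apply]
            rw [AA, fN_eq S (⟨by linarith, hsT⟩ : t + s ∈ Set.Ioo 0 S.T)]
            exact mul_nonneg (mul_nonneg (Real.exp_pos _).le (survN_pos S t s).le) hfge
        simp only [phi]
        linarith [hadd]
      · rcases eq_or_lt_of_le h with hEq | hlt
        · rw [hEq]
        · have hadd := intervalIntegral.integral_add_adjacent_intervals (μ := volume)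
            ((cont_AA S t).intervalIntegrable 0 u0) ((cont_AA S t).intervalIntegrable u0 u)
          have hu0lt : u0 < S.T - t := lt_of_lt_of_le hlt hu.2
          have hu0eq : u0 = max (S.tstar - t) 0 := by
            rcases le_total (max (S.tstar - t) 0) (S.T - t) with h' | h'
            · rw [hu0def, min_eq_left h']
            · exfalso
              rw [hu0def, min_eq_right h'] at hu0lt
              exact lt_irrefl _ hu0lt
          have hneg : 0 ≤ ∫ s in u0..u, -(AA S t s) := by
            apply intervalIntegral.integral_nonneg_of_ae_restrict h
            filter_upwards [ae_restrict_of_ae (μ := volume)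
              ((ae_ne_const u0).and (ae_ne_const (S.T - t))),
              self_mem_ae_restrict (measurableSet_Icc :
                MeasurableSet (Set.Icc u0 u))] with s hs hmem
            have hsgt : u0 < s := lt_of_le_of_ne hmem.1 (Ne.symm hs.1)
            have hstar : S.tstar < t + s := by
              have hst : S.tstar - t ≤ u0 := by rw [hu0eq]; exact le_max_left _ _
              linarith
            have hsle : t + s ≤ S.T := by linarith [hmem.2, hu.2]
            have hflt : S.f (t + s) < 0 := hA2.2.1 (t + s) ⟨hstar, hsle⟩
            have hsT : t + s < S.T :=
              lt_of_le_of_ne hsle (fun hEq2 => hs.2 (by linarith))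
            have hspos : (0:ℝ) < t + s := by
              have := tstar_nonneg S
              linarith
            rw [Pi.zero_apply, AA, fN_eq S (⟨hspos, hsT⟩ : t + s ∈ Set.Ioo 0 S.T)]
            nlinarith [mul_pos (Real.exp_pos (-S.c * s)) (survN_pos S t s), hflt]
          have h0le : (∫ s in u0..u, AA S t s) ≤ 0 := by
            rw [intervalIntegral.integral_neg] at hneg
            linarith
          simp only [phi]
          linarith [hadd]
    have hIeq : (if t < S.tstar then
        ∫ s in (0:ℝ)..(S.tstar - t), Real.exp (-S.c * s) * S.surv t s * S.f (t + s)
      else 0) = phi S t u0 := by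
      rcases lt_or_ge t S.tstar with hts | hts
      · rw [if_pos hts]
        have hts0 : (0:ℝ) ≤ S.tstar - t := by linarith
        have hu0eq : u0 = S.tstar - t := by
          rw [hu0def, max_eq_left hts0, min_eq_left (by linarith [tstar_le_T S])]
        rw [hu0eq, phi]
        apply intervalIntegral.integral_congr_ae
        filter_upwards [ae_ne_const (S.T - t)] with s hs hmem
        rw [Set.uIoc_of_le hts0] at hmem
        have hs0 : (0:ℝ) < s := hmem.1
        have hsT : t + s < S.T := by
          have hle : t + s ≤ S.tstar := by linarith [hmem.2]
          rcases eq_or_lt_of_le (hle.trans (tstar_le_T S)) with hEq | hlt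
          · exact absurd (by linarith : s = S.T - t) hs
          · exact hlt
        rw [surv_eq S ht0 hs0.le, AA, fN_eq S (⟨by linarith, hsT⟩ : t + s ∈ Set.Ioo 0 S.T)]
      · rw [if_neg (not_lt.2 hts)]
        have hu0eq : u0 = 0 := by
          rw [hu0def, max_eq_right (by linarith : S.tstar - t ≤ 0), min_eq_left hu1]
        rw [hu0eq, phi, intervalIntegral.integral_same]
    set C0 : ℝ := ∫ ω, (MB * YY S t ω + e1 S (S.T - t) ω) ∂S.P with hC0def
    have hlow0 : ∀ z : ℝ, phi S t u0 ≤ S.w t z := by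
      intro z
      have hτ0 := hconst u0 hu0mem
      have hplow : ∀ ω, phi S t u0 ≤ pN S t z (fun _ => u0) ω := by
        intro ω
        rw [pN]
        linarith [QI_nonneg S t z (fun _ => u0) ω, termN_nonneg S t z (fun _ => u0) ω]
      calc phi S t u0 = ∫ _ω, phi S t u0 ∂S.P := by
            rw [MeasureTheory.integral_const]; simp [measure_univ]
        _ ≤ ∫ ω, pN S t z (fun _ => u0) ω ∂S.P :=
            MeasureTheory.integral_mono (integrable_const _) (pN_integrable S htI hτ0 z) hplow
        _ ≤ S.w t z := by
            rw [hw]; exact le_csSup (hbdd z) ⟨_, hτ0, (hpe z _ hτ0).symm⟩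
    have hup0 : ∀ z : ℝ, 0 < z → S.w t z ≤ phi S t u0 + z * C0 := by
      intro z hz
      rw [hw]
      apply csSup_le (hne z)
      rintro x ⟨τ, hτ, rfl⟩
      rw [hpe z τ hτ]
      have hupint : Integrable
          (fun ω => phi S t u0 + z * (MB * YY S t ω + e1 S (S.T - t) ω)) S.P :=
        (integrable_const _).add
          ((((YY_int S t).const_mul MB).add (e1_int S hu1)).const_mul z)
      have hpup : ∀ ω, pN S t z τ ω
          ≤ phi S t u0 + z * (MB * YY S t ω + e1 S (S.T - t) ω) := by
        intro ω
        rw [pN]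
        have h1 : phi S t (τ ω) ≤ phi S t u0 := hphi_max (τ ω) (hτ.2 ω)
        have h2 : QI S t z τ ω ≤ MB * (|z| * YY S t ω) := QI_le S t hMB τ ω
        have h3 : termN S t z τ ω ≤ |z| * e1 S (S.T - t) ω := termN_le S htT z τ ω
        rw [abs_of_pos hz] at h2 h3
        have h4 : MB * (z * YY S t ω) + z * e1 S (S.T - t) ω
            = z * (MB * YY S t ω + e1 S (S.T - t) ω) := by ring
        linarith
      calc (∫ ω, pN S t z τ ω ∂S.P)
          ≤ ∫ ω, (phi S t u0 + z * (MB * YY S t ω + e1 S (S.T - t) ω)) ∂S.P :=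
            MeasureTheory.integral_mono (pN_integrable S htI hτ z) hupint hpup
        _ = phi S t u0 + z * C0 := by
            have hsum : Integrable (fun ω => MB * YY S t ω + e1 S (S.T - t) ω) S.P :=
              ((YY_int S t).const_mul MB).add (e1_int S hu1)
            have hg : Integrable
                (fun ω => z * (MB * YY S t ω + e1 S (S.T - t) ω)) S.P :=
              hsum.const_mul z
            rw [MeasureTheory.integral_add (integrable_const _) hg,
              MeasureTheory.integral_const_mul, MeasureTheory.integral_const, ← hC0def]
            simp [measure_univ]
    rw [hIeq]
    have htend2 : Filter.Tendsto (fun z : ℝ => phi S t u0 + z * C0)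
        (nhdsWithin 0 (Set.Ioi 0)) (nhds (phi S t u0)) := by
      have hc : Filter.Tendsto (fun z : ℝ => phi S t u0 + z * C0) (nhds 0)
          (nhds (phi S t u0 + 0 * C0)) :=
        (continuous_const.add (continuous_id.mul continuous_const)).tendsto 0
      rw [zero_mul, add_zero] at hc
      exact hc.mono_left nhdsWithin_le_nhds
    apply tendsto_of_tendsto_of_tendsto_of_le_of_le' tendsto_const_nhds htend2
    · exact Filter.Eventually.of_forall fun z => hlow0 z
    · filter_upwards [self_mem_nhdsWithin] with z hz
      exact hup0 z hz
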